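/- Let K ⊂ ℂ be compact and σ a finite Borel measure on K with σ(K) > 0, such that ‖f‖_K = ‖f‖_∞ for every continuous f on K, and such that (K, σ) satisfies the Nikolskii inequality with constants c_ℓ > 0 and r_ℓ > 0. Let (Z_n)_{n ≥ 0} be random Leja points for (K, σ): for every n ≥ 1, conditionally on (Z_0, …, Z_{n−1}), the law of Z_n is absolutely continuous with respect to σ with density proportional to z ↦ |π_n(z)| = ∏_{j=0}^{n−1} |z − Z_j|. Then for every ε > 0, almost surely the points (Z_n) are pairwise distinct and there exists a constant c ∈ (0, 1] (depending on the sample point) such that |π_n(Z_n)| ≥ c n^{−(1 + r_ℓ + ε)} ‖π_n‖_K for all n ≥ 1; that is, random Leja points are almost surely pseudo-Leja points of order 1 + r_ℓ + ε for K. -/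

import Mathlib

open MeasureTheory Finset

/-- Sup norm of a real-valued function over a set `K ⊆ ℂ`. -/
noncomputable def supK (K : Set ℂ) (f : ℂ → ℝ) : ℝ := sSup (f '' K)

/-- σ-essential supremum of a (nonnegative) real-valued function. -/
noncomputable def essSupK (σ : MeasureTheory.Measure ℂ) (f : ℂ → ℝ) : ℝ :=
  (essSup (fun z => ENNReal.ofReal (f z)) σ).toReal

section Aux

open Set
open scoped ENNReal NNReal

lemma my_countable_generatePiSystem {α : Type*} {b : Set (Set α)} (hb : b.Countable) :
    (generatePiSystem b).Countable := by
  have hsub : generatePiSystem b ⊆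
      Set.sInter '' {T : Set (Set α) | T.Finite ∧ T ⊆ b} := by
    intro t ht
    induction ht with
    | base hs => exact ⟨{_}, ⟨Set.finite_singleton _, by simpa using hs⟩, by simp⟩
    | inter hs ht hne ihs iht =>
      obtain ⟨T, hT, rfl⟩ := ihs
      obtain ⟨T', hT', rfl⟩ := iht
      exact ⟨T ∪ T', ⟨hT.1.union hT'.1, Set.union_subset hT.2 hT'.2⟩,
        Set.sInter_union T T'⟩
  exact ((Set.countable_setOf_finite_subset hb).image _).mono hsub

lemma integrable_of_abs_le_one {Ω : Type*} [MeasurableSpace Ω] (μ : Measure Ω)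
    [IsFiniteMeasure μ] {h : Ω → ℝ} (hm : AEStronglyMeasurable h μ) (hb : ∀ ω, |h ω| ≤ 1) :
    Integrable h μ :=
  (integrable_const (1:ℝ)).mono' hm (ae_of_all _ (by simpa using hb))

lemma key_disint {Ω : Type*} [MeasurableSpace Ω] (μ : Measure Ω) [IsProbabilityMeasure μ]
    (σ : Measure ℂ) [IsFiniteMeasure σ]
    {n : ℕ} {Y : Ω → (Fin n → ℂ)} (hY : Measurable Y) {Zn : Ω → ℂ} (hZn : Measurable Zn)
    (p : (Fin n → ℂ) → ℂ → ℝ) (hp : Continuous (fun q : (Fin n → ℂ) × ℂ => p q.1 q.2))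
    (hp0 : ∀ y w, 0 ≤ p y w)
    (hpint : ∀ y, Integrable (p y) σ)
    (hIpos : ∀ᵐ ω ∂μ, 0 < ∫ w, p (Y ω) w ∂σ)
    (hcond : ∀ g : ℂ → ℝ, Measurable g → (∀ z, |g z| ≤ 1) →
      μ[(fun ω => g (Zn ω)) |
          MeasurableSpace.comap Y (inferInstance : MeasurableSpace (Fin n → ℂ))] =ᵐ[μ]
        fun ω => (∫ w, g w * p (Y ω) w ∂σ) / ∫ w, p (Y ω) w ∂σ)
    (f : (Fin n → ℂ) × ℂ → ℝ) (hf : Measurable f) (hf0 : ∀ q, 0 ≤ f q) (hf1 : ∀ q, f q ≤ 1) :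
    Integrable (fun ω => (∫ w, f (Y ω, w) * p (Y ω) w ∂σ) / ∫ w, p (Y ω) w ∂σ) μ ∧
    ∫ ω, f (Y ω, Zn ω) ∂μ =
      ∫ ω, (∫ w, f (Y ω, w) * p (Y ω) w ∂σ) / (∫ w, p (Y ω) w ∂σ) ∂μ := by
  classical
  set κ := ProbabilityTheory.condDistrib Zn Y μ with hκ
  set I : Ω → ℝ := fun ω => ∫ w, p (Y ω) w ∂σ with hI
  -- continuity of sections
  have hpcont : ∀ y, Continuous (p y) := fun y =>
    hp.comp (Continuous.prodMk_right y)
  -- the countable π-system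
  obtain ⟨b, hbc, -, hbbasis⟩ := TopologicalSpace.exists_countable_basis ℂ
  set S := generatePiSystem b with hS
  have hSc : S.Countable := my_countable_generatePiSystem hbc
  have hSpi : IsPiSystem S := isPiSystem_generatePiSystem b
  have hgen : (inferInstance : MeasurableSpace ℂ) = MeasurableSpace.generateFrom S := by
    rw [hS, generateFrom_generatePiSystem_eq, ← hbbasis.borel_eq_generateFrom]
    exact BorelSpace.measurable_eq
  have hSmeas : ∀ s ∈ S, MeasurableSet s := fun s hs =>
    generatePiSystem_measurableSet (fun t ht => (hbbasis.isOpen ht).measurableSet) s hs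
  -- Step A : a.e. identification of the kernel
  have stepA : ∀ᵐ ω ∂μ,
      κ (Y ω) = σ.withDensity (fun w => ENNReal.ofReal (p (Y ω) w / I ω)) := by
    have hae : ∀ᵐ ω ∂μ, ∀ s ∈ S,
        ∫ y, s.indicator (fun _ => (1:ℝ)) y ∂(κ (Y ω)) =
          (∫ w, s.indicator (fun _ => (1:ℝ)) w * p (Y ω) w ∂σ) / I ω := by
      rw [ae_ball_iff hSc]
      intro s hs
      have hsm := hSmeas s hs
      have hgmeas : Measurable (s.indicator (fun _ => (1:ℝ))) :=
        measurable_const.indicator hsm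
      have hgb : ∀ z, |s.indicator (fun _ => (1:ℝ)) z| ≤ 1 := by
        intro z; by_cases h : z ∈ s <;> simp [Set.indicator, h]
      have h1 := hcond _ hgmeas hgb
      have hint : Integrable (fun ω => s.indicator (fun _ => (1:ℝ)) (Zn ω)) μ :=
        integrable_of_abs_le_one μ (hgmeas.comp hZn).aestronglyMeasurable fun ω => hgb _
      have h2 := ProbabilityTheory.condExp_ae_eq_integral_condDistrib hY hZn.aemeasurable
        hgmeas.stronglyMeasurable hint
      exact h2.symm.trans h1
    filter_upwards [hae, hIpos] with ω hω hIω
    haveI : IsProbabilityMeasure (κ (Y ω)) := by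
      rw [hκ]; infer_instance
    have hpInt : Integrable (fun w => p (Y ω) w / I ω) σ := (hpint (Y ω)).div_const _
    refine ext_of_generate_finite S hgen hSpi (fun s hs => ?_) ?_
    · have hsm := hSmeas s hs
      have hωs := hω s hs
      have hL : ∫ y, s.indicator (fun _ => (1:ℝ)) y ∂(κ (Y ω)) = (κ (Y ω) s).toReal := by
        rw [integral_indicator_const (1:ℝ) hsm, smul_eq_mul, mul_one, measureReal_def]
      have hR : (∫ w, s.indicator (fun _ => (1:ℝ)) w * p (Y ω) w ∂σ) / I ω
          = ∫ w in s, p (Y ω) w / I ω ∂σ := by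
        have : (fun w => s.indicator (fun _ => (1:ℝ)) w * p (Y ω) w)
            = s.indicator (fun w => p (Y ω) w) := by
          funext w; by_cases h : w ∈ s <;> simp [Set.indicator, h]
        rw [this, integral_indicator hsm, integral_div]
      have hwd : σ.withDensity (fun w => ENNReal.ofReal (p (Y ω) w / I ω)) s
          = ENNReal.ofReal (∫ w in s, p (Y ω) w / I ω ∂σ) := by
        rw [withDensity_apply _ hsm,
          ← ofReal_integral_eq_lintegral_ofReal hpInt.integrableOn
            (ae_of_all _ fun w => div_nonneg (hp0 _ _) hIω.le)]
      rw [hwd, ← hR, ← hωs, hL, ENNReal.ofReal_toReal (measure_ne_top _ _)]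
    · have hwd : σ.withDensity (fun w => ENNReal.ofReal (p (Y ω) w / I ω)) Set.univ
          = ENNReal.ofReal (∫ w, p (Y ω) w / I ω ∂σ) := by
        rw [withDensity_apply _ MeasurableSet.univ, Measure.restrict_univ,
          ← ofReal_integral_eq_lintegral_ofReal hpInt
            (ae_of_all _ fun w => div_nonneg (hp0 _ _) hIω.le)]
      rw [measure_univ, hwd, integral_div, div_self hIω.ne', ENNReal.ofReal_one]
  -- Step B
  have hf_int : Integrable (fun ω => f (Y ω, Zn ω)) μ := by
    refine integrable_of_abs_le_one μ ((hf.comp (hY.prodMk hZn)).aestronglyMeasurable) ?_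
    intro ω; rw [abs_le]; exact ⟨by linarith [hf0 (Y ω, Zn ω)], hf1 _⟩
  have hcomb := ProbabilityTheory.condExp_prod_ae_eq_integral_condDistrib hY hZn.aemeasurable
    hf.stronglyMeasurable hf_int
  have hmap_int : Integrable f (μ.map fun ω => (Y ω, Zn ω)) := by
    rw [integrable_map_measure hf.aestronglyMeasurable ((hY.prodMk hZn)).aemeasurable]
    exact hf_int
  have hint2 : Integrable (fun ω => ∫ y, f (Y ω, y) ∂(κ (Y ω))) μ :=
    hmap_int.integral_condDistrib hY.aemeasurable hZn.aemeasurable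
  -- pointwise identification of the κ-integral with the density integral
  have hptwise : ∀ᵐ ω ∂μ, (∫ y, f (Y ω, y) ∂(κ (Y ω)))
      = (∫ w, f (Y ω, w) * p (Y ω) w ∂σ) / I ω := by
    filter_upwards [stepA, hIpos] with ω hωA hIω
    rw [hωA]
    have hmeasd : Measurable (fun w => (p (Y ω) w / I ω).toNNReal) :=
      (((hpcont (Y ω)).measurable).div_const _).real_toNNReal
    have hwd : σ.withDensity (fun w => ENNReal.ofReal (p (Y ω) w / I ω))
        = σ.withDensity (fun w => ((p (Y ω) w / I ω).toNNReal : ℝ≥0∞)) := rfl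
    rw [hwd, integral_withDensity_eq_integral_smul hmeasd]
    calc ∫ w, (p (Y ω) w / I ω).toNNReal • f (Y ω, w) ∂σ
        = ∫ w, f (Y ω, w) * p (Y ω) w / I ω ∂σ := by
          refine integral_congr_ae (Filter.Eventually.of_forall fun w => ?_)
          simp only [NNReal.smul_def, Real.coe_toNNReal _ (div_nonneg (hp0 _ _) (show (0:ℝ) ≤ I ω from hIω.le)),
            smul_eq_mul]
          ring
      _ = (∫ w, f (Y ω, w) * p (Y ω) w ∂σ) / I ω := integral_div _ _
  have hbase := integral_condExp (μ := μ) hY.comap_le (f := fun ω => f (Y ω, Zn ω))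
  constructor
  · exact hint2.congr hptwise
  · rw [← hbase, integral_congr_ae hcomb, integral_congr_ae hptwise]

noncomputable def pfun (n : ℕ) (y : Fin n → ℂ) (w : ℂ) : ℝ :=
  ‖∏ j : Fin n, (w - y j)‖

lemma pfun_range {n : ℕ} {Ω : Type*} (Z : ℕ → Ω → ℂ) (ω : Ω) (w : ℂ) :
    pfun n (fun j : Fin n => Z j ω) w = ‖∏ j ∈ Finset.range n, (w - Z j ω)‖ := by
  rw [pfun, Fin.prod_univ_eq_prod_range (fun j => w - Z j ω) n]

lemma pfun_nonneg (n : ℕ) (y : Fin n → ℂ) (w : ℂ) : 0 ≤ pfun n y w :=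
  norm_nonneg _

lemma pfun_cont (n : ℕ) : Continuous fun q : (Fin n → ℂ) × ℂ => pfun n q.1 q.2 := by
  apply continuous_norm.comp
  exact continuous_finset_prod _ fun j _ =>
    continuous_snd.sub ((continuous_apply j).comp continuous_fst)

lemma pfun_cont_right (n : ℕ) (y : Fin n → ℂ) : Continuous (pfun n y) := by
  unfold pfun
  exact continuous_norm.comp
    (continuous_finset_prod _ fun j _ => continuous_id.sub continuous_const)

lemma pfun_integrable {K : Set ℂ} (hK : IsCompact K) {σ : Measure ℂ} [IsFiniteMeasure σ]
    (hσK : σ Kᶜ = 0) (n : ℕ) (y : Fin n → ℂ) : Integrable (pfun n y) σ := by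
  have h1 : IntegrableOn (pfun n y) K σ :=
    ((pfun_cont_right n y).continuousOn).integrableOn_compact hK
  have h2 : IntegrableOn (pfun n y) Kᶜ σ := by
    rw [IntegrableOn, Measure.restrict_eq_zero.mpr hσK]
    exact integrable_zero_measure
  have := h1.union h2
  rwa [Set.union_compl_self, integrableOn_univ] at this

noncomputable def Sfun (K : Set ℂ) (n : ℕ) (y : Fin n → ℂ) : ℝ := supK K (pfun n y)

lemma Sfun_cont (K : Set ℂ) (hK : IsCompact K) (n : ℕ) : Continuous (Sfun K n) :=
  hK.continuous_sSup (pfun_cont n)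

lemma le_Sfun {K : Set ℂ} (hK : IsCompact K) (n : ℕ) (y : Fin n → ℂ) {z : ℂ} (hz : z ∈ K) :
    pfun n y z ≤ Sfun K n y :=
  le_csSup (hK.bddAbove_image ((pfun_cont_right n y).continuousOn))
    (Set.mem_image_of_mem _ hz)

lemma Sfun_nonneg {K : Set ℂ} (hK : IsCompact K) (hKne : K.Nonempty) (n : ℕ)
    (y : Fin n → ℂ) : 0 ≤ Sfun K n y := by
  obtain ⟨z, hz⟩ := hKne
  exact (pfun_nonneg n y z).trans (le_Sfun hK n y hz)

/-- the "bad" event at level `n`, with exponent `a`. -/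
def Aset (K : Set ℂ) (a : ℝ) (n : ℕ) : Set ((Fin n → ℂ) × ℂ) :=
  {q | pfun n q.1 q.2 < (n:ℝ) ^ a * Sfun K n q.1}

lemma Aset_open (K : Set ℂ) (hK : IsCompact K) (a : ℝ) (n : ℕ) : IsOpen (Aset K a n) :=
  isOpen_lt (pfun_cont n) (continuous_const.mul ((Sfun_cont K hK n).comp continuous_fst))

/-- the zero set at level `n`. -/
def Dset (n : ℕ) : Set ((Fin n → ℂ) × ℂ) := {q | (∏ j : Fin n, (q.2 - q.1 j)) = 0}

lemma Dset_closed (n : ℕ) : IsClosed (Dset n) :=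
  isClosed_eq (continuous_finset_prod _ fun j _ =>
    continuous_snd.sub ((continuous_apply j).comp continuous_fst)) continuous_const

end Aux
theorem stmt4 {Ω : Type*} [MeasurableSpace Ω] (ℙ : Measure Ω) [IsProbabilityMeasure ℙ]
    (K : Set ℂ) (hK : IsCompact K)
    (σ : Measure ℂ) [IsFiniteMeasure σ] (hσK : σ Kᶜ = 0) (hσpos : 0 < σ K)
    (hlinf : ∀ f : ℂ → ℝ, ContinuousOn f K →
      supK K (fun z => |f z|) = essSupK σ (fun z => |f z|))
    (c_ℓ r_ℓ : ℝ) (hcℓ : 0 < c_ℓ) (hrℓ : 0 < r_ℓ)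
    (hNik : ∀ m : ℕ, 1 ≤ m → ∀ P : Polynomial ℂ, P.natDegree ≤ m →
      essSupK σ (fun z => ‖P.eval z‖) ≤
        c_ℓ * (m : ℝ) ^ r_ℓ * ∫ z, ‖P.eval z‖ ∂σ)
    -- the random Leja points
    (Z : ℕ → Ω → ℂ) (hZmeas : ∀ n, Measurable (Z n)) (hZK : ∀ n ω, Z n ω ∈ K)
    (hpos : ∀ n : ℕ, 1 ≤ n → ∀ᵐ ω ∂ℙ,
      0 < ∫ w, ‖∏ j ∈ Finset.range n, (w - Z j ω)‖ ∂σ)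
    -- conditionally on (Z_0, …, Z_{n−1}), the law of Z_n has density proportional
    -- to |π_n| with respect to σ
    (hcond : ∀ n : ℕ, 1 ≤ n → ∀ g : ℂ → ℝ, Measurable g → (∀ z, |g z| ≤ 1) →
      ℙ[(fun ω => g (Z n ω)) |
          MeasurableSpace.comap (fun ω (j : Fin n) => Z j ω)
            (inferInstance : MeasurableSpace (Fin n → ℂ))]
        =ᵐ[ℙ] fun ω =>
          (∫ w, g w * ‖∏ j ∈ Finset.range n, (w - Z j ω)‖ ∂σ) /
            ∫ w, ‖∏ j ∈ Finset.range n, (w - Z j ω)‖ ∂σ)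
    (ε : ℝ) (hε : 0 < ε) :
    ∀ᵐ ω ∂ℙ, (∀ i j : ℕ, i ≠ j → Z i ω ≠ Z j ω) ∧
      ∃ c : ℝ, 0 < c ∧ c ≤ 1 ∧ ∀ n : ℕ, 1 ≤ n →
        c * (n : ℝ) ^ (-(1 + r_ℓ + ε)) *
            supK K (fun w => ‖∏ j ∈ Finset.range n, (w - Z j ω)‖) ≤
          ‖∏ j ∈ Finset.range n, (Z n ω - Z j ω)‖ := by
  classical
  have hKne : K.Nonempty := by
    rcases Set.eq_empty_or_nonempty K with h | h
    · rw [h, measure_empty] at hσpos; exact absurd hσpos (lt_irrefl 0)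
    · exact h
  set M : ℝ := (σ Set.univ).toReal with hM
  have hM0 : 0 ≤ M := ENNReal.toReal_nonneg
  set a : ℝ := -(1 + r_ℓ + ε) with ha
  have hane : a ≠ 0 := by rw [ha]; intro h; nlinarith [hrℓ, hε]
  -- Nikolskii for Sfun
  have hNik' : ∀ n : ℕ, 1 ≤ n → ∀ y : Fin n → ℂ,
      Sfun K n y ≤ c_ℓ * (n:ℝ) ^ r_ℓ * ∫ w, pfun n y w ∂σ := by
    intro n hn y
    set P : Polynomial ℂ := ∏ j : Fin n, (Polynomial.X - Polynomial.C (y j)) with hP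
    have hPeval : (fun z => ‖P.eval z‖) = pfun n y := by
      funext z; rw [hP]; simp [Polynomial.eval_prod, pfun]
    have hdeg : P.natDegree ≤ n := by
      rw [hP]
      refine (Polynomial.natDegree_prod_le _ _).trans ?_
      simp [Polynomial.natDegree_X_sub_C]
    have h1 := hNik n hn P hdeg
    rw [hPeval] at h1
    have h3 : (fun z => |pfun n y z|) = pfun n y :=
      funext fun z => abs_of_nonneg (pfun_nonneg n y z)
    have h4 := hlinf (pfun n y) ((pfun_cont_right n y).continuousOn)
    rw [h3] at h4
    calc Sfun K n y = essSupK σ (pfun n y) := h4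
      _ ≤ _ := h1
  -- the bad events
  set Ev : ℕ → Set Ω :=
    fun n => (fun ω => ((fun j : Fin n => Z j ω), Z n ω)) ⁻¹' Aset K a n with hEv
  have hYmeas : ∀ n : ℕ, Measurable (fun ω => (fun j : Fin n => Z j ω)) :=
    fun n => measurable_pi_lambda _ fun j => hZmeas j
  have hVmeas : ∀ n : ℕ, Measurable (fun ω => ((fun j : Fin n => Z j ω), Z n ω)) :=
    fun n => (hYmeas n).prodMk (hZmeas n)
  -- main estimate
  have keybound : ∀ n : ℕ, 1 ≤ n →
      ℙ (Ev n) ≤ ENNReal.ofReal (c_ℓ * M * (n:ℝ) ^ (-(1 + ε))) := by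
    intro n hn
    have hnpos : (0:ℝ) < (n:ℝ) := by exact_mod_cast hn
    have hPeq : ∀ ω : Ω, ∀ w : ℂ, ‖∏ j ∈ Finset.range n, (w - Z j ω)‖
        = pfun n (fun j : Fin n => Z j ω) w := fun ω w => (pfun_range Z ω w).symm
    have hIpos' : ∀ᵐ ω ∂ℙ, 0 < ∫ w, pfun n (fun j : Fin n => Z j ω) w ∂σ := by
      refine (hpos n hn).mono fun ω hω => ?_
      simp_rw [hPeq ω] at hω; exact hω
    have hcond' : ∀ g : ℂ → ℝ, Measurable g → (∀ z, |g z| ≤ 1) →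
        ℙ[(fun ω => g (Z n ω)) |
            MeasurableSpace.comap (fun ω (j : Fin n) => Z j ω)
              (inferInstance : MeasurableSpace (Fin n → ℂ))] =ᵐ[ℙ]
          fun ω => (∫ w, g w * pfun n (fun j : Fin n => Z j ω) w ∂σ) /
            ∫ w, pfun n (fun j : Fin n => Z j ω) w ∂σ := by
      intro g hg hb
      have h := hcond n hn g hg hb
      have heqf : (fun ω => (∫ w, g w * ‖∏ j ∈ Finset.range n, (w - Z j ω)‖ ∂σ) /
            ∫ w, ‖∏ j ∈ Finset.range n, (w - Z j ω)‖ ∂σ)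
          = fun ω => (∫ w, g w * pfun n (fun j : Fin n => Z j ω) w ∂σ) /
            ∫ w, pfun n (fun j : Fin n => Z j ω) w ∂σ := by
        funext ω; simp_rw [hPeq ω]
      rw [heqf] at h; exact h
    have hfmeas : Measurable ((Aset K a n).indicator (fun _ => (1:ℝ))) :=
      measurable_const.indicator (Aset_open K hK a n).measurableSet
    obtain ⟨hint, heqI⟩ := key_disint ℙ σ (hYmeas n) (hZmeas n) (pfun n) (pfun_cont n)
      (pfun_nonneg n) (fun y => pfun_integrable hK hσK n y) hIpos' hcond'
      ((Aset K a n).indicator (fun _ => (1:ℝ))) hfmeas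
      (fun q => by by_cases h : q ∈ Aset K a n <;> simp [Set.indicator, h])
      (fun q => by by_cases h : q ∈ Aset K a n <;> simp [Set.indicator, h])
    have hEvmeas : MeasurableSet (Ev n) := (hVmeas n) (Aset_open K hK a n).measurableSet
    have hLHS : ∫ ω, (Aset K a n).indicator (fun _ => (1:ℝ))
        ((fun j : Fin n => Z j ω), Z n ω) ∂ℙ = (ℙ (Ev n)).toReal := by
      have hfi : (fun ω => (Aset K a n).indicator (fun _ => (1:ℝ))
          ((fun j : Fin n => Z j ω), Z n ω)) = (Ev n).indicator (fun _ => (1:ℝ)) := by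
        funext ω
        by_cases h : ω ∈ Ev n
        · have h' : ((fun j : Fin n => Z j ω), Z n ω) ∈ Aset K a n := h
          simp [Set.indicator, h, h']
        · have h' : ((fun j : Fin n => Z j ω), Z n ω) ∉ Aset K a n := h
          simp [Set.indicator, h, h']
      rw [hfi, integral_indicator_const (1:ℝ) hEvmeas, smul_eq_mul, mul_one, measureReal_def]
    have hRHSle : ∫ ω, (∫ w, (Aset K a n).indicator (fun _ => (1:ℝ))
          ((fun j : Fin n => Z j ω), w) * pfun n (fun j : Fin n => Z j ω) w ∂σ) /
          (∫ w, pfun n (fun j : Fin n => Z j ω) w ∂σ) ∂ℙ ≤ c_ℓ * M * (n:ℝ) ^ (-(1 + ε)) := by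
      have hconst : ∫ (_ : Ω), (c_ℓ * M * (n:ℝ) ^ (-(1 + ε)) : ℝ) ∂ℙ
          = c_ℓ * M * (n:ℝ) ^ (-(1 + ε)) := by simp
      rw [← hconst]
      refine integral_mono_ae hint (integrable_const _) ?_
      filter_upwards [hIpos'] with ω hIω
      have hS0 : 0 ≤ Sfun K n (fun j : Fin n => Z j ω) := Sfun_nonneg hK hKne n _
      have hrn : (0:ℝ) ≤ (n:ℝ) ^ a := (Real.rpow_pos_of_pos hnpos a).le
      have hnum : (∫ w, (Aset K a n).indicator (fun _ => (1:ℝ))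
            ((fun j : Fin n => Z j ω), w) * pfun n (fun j : Fin n => Z j ω) w ∂σ)
          ≤ ((n:ℝ) ^ a * Sfun K n (fun j : Fin n => Z j ω)) * M := by
        have hb : ∀ w, (Aset K a n).indicator (fun _ => (1:ℝ))
              ((fun j : Fin n => Z j ω), w) * pfun n (fun j : Fin n => Z j ω) w
            ≤ (n:ℝ) ^ a * Sfun K n (fun j : Fin n => Z j ω) := by
          intro w
          by_cases h : ((fun j : Fin n => Z j ω), w) ∈ Aset K a n
          · have h' : pfun n (fun j : Fin n => Z j ω) w
                < (n:ℝ) ^ a * Sfun K n (fun j : Fin n => Z j ω) := h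
            simpa [Set.indicator, h] using h'.le
          · simp [Set.indicator, h, mul_nonneg hrn hS0]
        have hintg : Integrable (fun w => (Aset K a n).indicator (fun _ => (1:ℝ))
            ((fun j : Fin n => Z j ω), w) * pfun n (fun j : Fin n => Z j ω) w) σ := by
          refine (pfun_integrable hK hσK n (fun j : Fin n => Z j ω)).mono' ?_ ?_
          · exact ((hfmeas.comp (measurable_const.prodMk measurable_id)).mul
              (pfun_cont_right n _).measurable).aestronglyMeasurable
          · refine ae_of_all _ fun w => ?_
            by_cases h : ((fun j : Fin n => Z j ω), w) ∈ Aset K a n <;>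
              simp [Set.indicator, h, abs_of_nonneg (pfun_nonneg n _ w),
                pfun_nonneg n _ w, Real.norm_eq_abs]
        calc (∫ w, (Aset K a n).indicator (fun _ => (1:ℝ))
              ((fun j : Fin n => Z j ω), w) * pfun n (fun j : Fin n => Z j ω) w ∂σ)
            ≤ ∫ (_ : ℂ), ((n:ℝ) ^ a * Sfun K n (fun j : Fin n => Z j ω)) ∂σ :=
              integral_mono hintg (integrable_const _) hb
          _ = ((n:ℝ) ^ a * Sfun K n (fun j : Fin n => Z j ω)) * M := by
              rw [integral_const, smul_eq_mul, mul_comm, measureReal_def]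
      have hdiv := (div_le_div_iff_of_pos_right hIω).mpr hnum
      refine hdiv.trans ?_
      have hSle := hNik' n hn (fun j : Fin n => Z j ω)
      have hfrac : Sfun K n (fun j : Fin n => Z j ω) /
          (∫ w, pfun n (fun j : Fin n => Z j ω) w ∂σ) ≤ c_ℓ * (n:ℝ) ^ r_ℓ :=
        (div_le_iff₀ hIω).mpr hSle
      calc ((n:ℝ) ^ a * Sfun K n (fun j : Fin n => Z j ω)) * M /
            (∫ w, pfun n (fun j : Fin n => Z j ω) w ∂σ)
          = ((n:ℝ) ^ a * M) * (Sfun K n (fun j : Fin n => Z j ω) /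
            (∫ w, pfun n (fun j : Fin n => Z j ω) w ∂σ)) := by ring
        _ ≤ ((n:ℝ) ^ a * M) * (c_ℓ * (n:ℝ) ^ r_ℓ) :=
            mul_le_mul_of_nonneg_left hfrac (by positivity)
        _ = c_ℓ * M * ((n:ℝ) ^ a * (n:ℝ) ^ r_ℓ) := by ring
        _ = c_ℓ * M * (n:ℝ) ^ (-(1 + ε)) := by
            rw [← Real.rpow_add hnpos, ha, show (-(1 + r_ℓ + ε) + r_ℓ) = -(1 + ε) by ring]
    have hfinal : (ℙ (Ev n)).toReal ≤ c_ℓ * M * (n:ℝ) ^ (-(1 + ε)) := by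
      rw [← hLHS]; rw [heqI]; exact hRHSle
    calc ℙ (Ev n) = ENNReal.ofReal ((ℙ (Ev n)).toReal) :=
          (ENNReal.ofReal_toReal (measure_ne_top _ _)).symm
      _ ≤ ENNReal.ofReal (c_ℓ * M * (n:ℝ) ^ (-(1 + ε))) := ENNReal.ofReal_le_ofReal hfinal
  -- the zero events
  have keyD : ∀ n : ℕ, 1 ≤ n →
      ℙ ((fun ω => ((fun j : Fin n => Z j ω), Z n ω)) ⁻¹' Dset n) = 0 := by
    intro n hn
    have hPeq : ∀ ω : Ω, ∀ w : ℂ, ‖∏ j ∈ Finset.range n, (w - Z j ω)‖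
        = pfun n (fun j : Fin n => Z j ω) w := fun ω w => (pfun_range Z ω w).symm
    have hIpos' : ∀ᵐ ω ∂ℙ, 0 < ∫ w, pfun n (fun j : Fin n => Z j ω) w ∂σ := by
      refine (hpos n hn).mono fun ω hω => ?_
      simp_rw [hPeq ω] at hω; exact hω
    have hcond' : ∀ g : ℂ → ℝ, Measurable g → (∀ z, |g z| ≤ 1) →
        ℙ[(fun ω => g (Z n ω)) |
            MeasurableSpace.comap (fun ω (j : Fin n) => Z j ω)
              (inferInstance : MeasurableSpace (Fin n → ℂ))] =ᵐ[ℙ]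
          fun ω => (∫ w, g w * pfun n (fun j : Fin n => Z j ω) w ∂σ) /
            ∫ w, pfun n (fun j : Fin n => Z j ω) w ∂σ := by
      intro g hg hb
      have h := hcond n hn g hg hb
      have heqf : (fun ω => (∫ w, g w * ‖∏ j ∈ Finset.range n, (w - Z j ω)‖ ∂σ) /
            ∫ w, ‖∏ j ∈ Finset.range n, (w - Z j ω)‖ ∂σ)
          = fun ω => (∫ w, g w * pfun n (fun j : Fin n => Z j ω) w ∂σ) /
            ∫ w, pfun n (fun j : Fin n => Z j ω) w ∂σ := by
        funext ω; simp_rw [hPeq ω]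
      rw [heqf] at h; exact h
    have hfmeas : Measurable ((Dset n).indicator (fun _ => (1:ℝ))) :=
      measurable_const.indicator (Dset_closed n).measurableSet
    obtain ⟨hint, heqI⟩ := key_disint ℙ σ (hYmeas n) (hZmeas n) (pfun n) (pfun_cont n)
      (pfun_nonneg n) (fun y => pfun_integrable hK hσK n y) hIpos' hcond'
      ((Dset n).indicator (fun _ => (1:ℝ))) hfmeas
      (fun q => by by_cases h : q ∈ Dset n <;> simp [Set.indicator, h])
      (fun q => by by_cases h : q ∈ Dset n <;> simp [Set.indicator, h])
    have hDmeas : MeasurableSet ((fun ω => ((fun j : Fin n => Z j ω), Z n ω)) ⁻¹' Dset n) :=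
      (hVmeas n) (Dset_closed n).measurableSet
    have hLHS : ∫ ω, (Dset n).indicator (fun _ => (1:ℝ))
        ((fun j : Fin n => Z j ω), Z n ω) ∂ℙ
        = (ℙ ((fun ω => ((fun j : Fin n => Z j ω), Z n ω)) ⁻¹' Dset n)).toReal := by
      have hfi : (fun ω => (Dset n).indicator (fun _ => (1:ℝ))
          ((fun j : Fin n => Z j ω), Z n ω))
          = ((fun ω => ((fun j : Fin n => Z j ω), Z n ω)) ⁻¹' Dset n).indicator
            (fun _ => (1:ℝ)) := by
        funext ω
        by_cases h : ((fun j : Fin n => Z j ω), Z n ω) ∈ Dset n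
        · have h' : ω ∈ (fun ω => ((fun j : Fin n => Z j ω), Z n ω)) ⁻¹' Dset n := h
          simp [Set.indicator, h, h']
        · have h' : ω ∉ (fun ω => ((fun j : Fin n => Z j ω), Z n ω)) ⁻¹' Dset n := h
          simp [Set.indicator, h, h']
      rw [hfi, integral_indicator_const (1:ℝ) hDmeas, smul_eq_mul, mul_one, measureReal_def]
    have hzero : ∀ ω : Ω, (∫ w, (Dset n).indicator (fun _ => (1:ℝ))
          ((fun j : Fin n => Z j ω), w) * pfun n (fun j : Fin n => Z j ω) w ∂σ) /
          (∫ w, pfun n (fun j : Fin n => Z j ω) w ∂σ) = 0 := by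
      intro ω
      have : (fun w => (Dset n).indicator (fun _ => (1:ℝ))
          ((fun j : Fin n => Z j ω), w) * pfun n (fun j : Fin n => Z j ω) w)
          = fun _ => (0:ℝ) := by
        funext w
        by_cases h : ((fun j : Fin n => Z j ω), w) ∈ Dset n
        · have h' : (∏ j : Fin n, (w - Z j ω)) = 0 := h
          simp [pfun, h']
        · simp [Set.indicator, h]
      rw [this, integral_zero, zero_div]
    have : (ℙ ((fun ω => ((fun j : Fin n => Z j ω), Z n ω)) ⁻¹' Dset n)).toReal = 0 := by
      rw [← hLHS, heqI]
      simp_rw [hzero]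
      exact integral_zero _ _
    exact (ENNReal.toReal_eq_zero_iff _).mp this |>.resolve_right (measure_ne_top _ _)
  -- summability and Borel–Cantelli
  have hEv0 : Ev 0 = ∅ := by
    ext ω
    simp only [hEv, Set.mem_preimage, Aset, Set.mem_setOf_eq, Nat.cast_zero,
      Real.zero_rpow hane, zero_mul, Set.mem_empty_iff_false, iff_false, not_lt]
    exact pfun_nonneg 0 _ _
  have hsum : (∑' n, ℙ (Ev n)) ≠ ⊤ := by
    have hb : ∀ n : ℕ, ℙ (Ev n) ≤ ENNReal.ofReal (c_ℓ * M * (n:ℝ) ^ (-(1 + ε))) := by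
      intro n
      rcases Nat.eq_zero_or_pos n with h | h
      · rw [h, hEv0]; simp
      · exact keybound n h
    have hsummable : Summable (fun n : ℕ => c_ℓ * M * (n:ℝ) ^ (-(1 + ε))) :=
      (Real.summable_nat_rpow.mpr (by linarith)).mul_left _
    have := ENNReal.tsum_le_tsum hb
    refine ne_top_of_le_ne_top ?_ this
    rw [← ENNReal.ofReal_tsum_of_nonneg (fun n => by positivity) hsummable]
    exact ENNReal.ofReal_ne_top
  have hBC : ∀ᵐ ω ∂ℙ, ∀ᶠ n in Filter.atTop, ω ∉ Ev n := ae_eventually_notMem hsum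
  have hDae : ∀ᵐ ω ∂ℙ, ∀ n : ℕ, 1 ≤ n →
      ω ∉ (fun ω => ((fun j : Fin n => Z j ω), Z n ω)) ⁻¹' Dset n := by
    rw [ae_all_iff]
    intro n
    rcases Nat.eq_zero_or_pos n with h | h
    · subst h; filter_upwards with ω h1; omega
    · have h0 := keyD n h
      filter_upwards [measure_eq_zero_iff_ae_notMem.mp h0] with ω hω _
      exact hω
  -- final assembly
  filter_upwards [hBC, hDae] with ω hBCω hDω
  have hq : ∀ n : ℕ, 1 ≤ n → (∏ j ∈ Finset.range n, (Z n ω - Z j ω)) ≠ 0 := by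
    intro n hn hcontra
    refine hDω n hn ?_
    have : (∏ j : Fin n, (Z n ω - Z j ω)) = 0 := by
      rw [Fin.prod_univ_eq_prod_range (fun j => Z n ω - Z j ω) n]; exact hcontra
    exact this
  constructor
  · intro i j hij
    rcases hij.lt_or_gt with h | h
    · intro heqz
      refine hq j (by omega) ?_
      exact Finset.prod_eq_zero (Finset.mem_range.mpr h) (by rw [heqz, sub_self])
    · intro heqz
      refine hq i (by omega) ?_
      exact Finset.prod_eq_zero (Finset.mem_range.mpr h) (by rw [heqz, sub_self])
  · obtain ⟨N, hN⟩ := Filter.eventually_atTop.mp hBCω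
    set N₀ := max N 1 with hN₀
    set F := Finset.Icc 1 N₀ with hF
    have h1F : 1 ∈ F := Finset.mem_Icc.mpr ⟨le_refl 1, le_max_right N 1⟩
    have hFne : F.Nonempty := ⟨1, h1F⟩
    set q : ℕ → ℝ := fun n => ‖∏ j ∈ Finset.range n, (Z n ω - Z j ω)‖ with hqdef
    set S' : ℕ → ℝ := fun n => Sfun K n (fun j : Fin n => Z j ω) with hS'
    have hqpos : ∀ n : ℕ, 1 ≤ n → 0 < q n := fun n hn => norm_pos_iff.mpr (hq n hn)
    have hqS : ∀ n : ℕ, q n ≤ S' n := by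
      intro n
      have := le_Sfun hK n (fun j : Fin n => Z j ω) (hZK n ω)
      rwa [pfun_range Z ω (Z n ω)] at this
    have hSpos : ∀ n : ℕ, 1 ≤ n → 0 < S' n := fun n hn => lt_of_lt_of_le (hqpos n hn) (hqS n)
    set c : ℝ := F.inf' hFne (fun n => min 1 (q n / ((n:ℝ) ^ a * S' n))) with hc
    have hc1 : c ≤ 1 := (Finset.inf'_le _ h1F).trans (min_le_left _ _)
    have hcpos : 0 < c := by
      rw [hc, Finset.lt_inf'_iff]
      intro n hnF
      have hn1 : 1 ≤ n := (Finset.mem_Icc.mp hnF).1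
      have hnpos : (0:ℝ) < (n:ℝ) := by exact_mod_cast hn1
      exact lt_min one_pos (div_pos (hqpos n hn1)
        (mul_pos (Real.rpow_pos_of_pos hnpos a) (hSpos n hn1)))
    refine ⟨c, hcpos, hc1, ?_⟩
    intro n hn
    have hnpos : (0:ℝ) < (n:ℝ) := by exact_mod_cast hn
    have hSg : supK K (fun w => ‖∏ j ∈ Finset.range n, (w - Z j ω)‖) = S' n := by
      have : (fun w => ‖∏ j ∈ Finset.range n, (w - Z j ω)‖)
          = pfun n (fun j : Fin n => Z j ω) := funext fun w => (pfun_range Z ω w).symm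
      rw [hS', this]; rfl
    rw [hSg, mul_assoc]
    show c * ((n:ℝ) ^ a * S' n) ≤ q n
    have hpos' : 0 < (n:ℝ) ^ a * S' n :=
      mul_pos (Real.rpow_pos_of_pos hnpos a) (hSpos n hn)
    by_cases hcase : n ≤ N₀
    · have hnF : n ∈ F := Finset.mem_Icc.mpr ⟨hn, hcase⟩
      have h1 : c ≤ q n / ((n:ℝ) ^ a * S' n) :=
        (Finset.inf'_le _ hnF).trans (min_le_right _ _)
      calc c * ((n:ℝ) ^ a * S' n) ≤ (q n / ((n:ℝ) ^ a * S' n)) * ((n:ℝ) ^ a * S' n) :=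
            mul_le_mul_of_nonneg_right h1 hpos'.le
        _ = q n := div_mul_cancel₀ _ hpos'.ne'
    · have hnN : N ≤ n := le_trans (le_max_left N 1) (le_of_lt (not_le.mp hcase))
      have hstep : (n:ℝ) ^ a * S' n ≤ q n := by
        have hne := hN n hnN
        have : ¬ (pfun n (fun j : Fin n => Z j ω) (Z n ω) < (n:ℝ) ^ a * S' n) := by
          intro hlt
          exact hne hlt
        rw [pfun_range Z ω (Z n ω)] at this
        exact not_lt.mp this
      calc c * ((n:ℝ) ^ a * S' n) ≤ 1 * ((n:ℝ) ^ a * S' n) :=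
            mul_le_mul_of_nonneg_right hc1 hpos'.le
        _ = (n:ℝ) ^ a * S' n := one_mul _
        _ ≤ q n := hstep
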